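/- Let f(q) = ∑ₙ qⁿ aₙ be a quaternionic power series with radius of convergence R > 0, and let x, y ∈ ℝ with x² + y² < R². Then there exist quaternions b and c (depending only on x, y) such that f(x + Iy) = b + Ic for every I ∈ 𝕊 = {q ∈ H : q² = -1}. -/

import Mathlib

local notation "ℍ" => Quaternion ℝ

theorem representation_exists (a : ℕ → ℍ) (R : ℝ) (hR : 0 < R)
    (hconv : ∀ q : ℍ, ‖q‖ < R → Summable (fun n : ℕ => ‖q^n * a n‖))
    (x y : ℝ) (hxy : x^2 + y^2 < R^2) :
    ∃ b c : ℍ, ∀ I : ℍ, I^2 = -1 →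
      ∑' n : ℕ, ((x : ℍ) + y • I)^n * a n = b + I * c := by
  set z : ℂ := ⟨x, y⟩ with hz
  have habs : ‖z‖ ^ 2 = x ^ 2 + y ^ 2 := by
    rw [Complex.sq_norm, Complex.normSq_mk]; ring
  have habsR : ‖z‖ < R := by
    nlinarith [norm_nonneg z, habs]
  -- summability of coefficient series
  have hq0 : ‖((‖z‖ : ℝ) : ℍ)‖ < R := by
    rwa [Quaternion.norm_coe, Real.norm_eq_abs, abs_of_nonneg (norm_nonneg z)]
  have hsum0 : Summable (fun n : ℕ => ‖z‖ ^ n * ‖a n‖) := by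
    have := hconv _ hq0
    simpa [norm_mul, Quaternion.norm_coe,
      abs_of_nonneg (norm_nonneg z)] using this
  have hsumre : Summable (fun n : ℕ => ((z ^ n).re) • a n) := by
    refine Summable.of_norm_bounded hsum0 fun n => ?_
    rw [norm_smul, Real.norm_eq_abs]
    gcongr
    calc |(z ^ n).re| ≤ ‖z ^ n‖ := Complex.abs_re_le_norm _
      _ = ‖z‖ ^ n := norm_pow _ _
  have hsumim : Summable (fun n : ℕ => ((z ^ n).im) • a n) := by
    refine Summable.of_norm_bounded hsum0 fun n => ?_
    rw [norm_smul, Real.norm_eq_abs]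
    gcongr
    calc |(z ^ n).im| ≤ ‖z ^ n‖ := Complex.abs_im_le_norm _
      _ = ‖z‖ ^ n := norm_pow _ _
  refine ⟨∑' n : ℕ, ((z ^ n).re) • a n, ∑' n : ℕ, ((z ^ n).im) • a n, fun I hI => ?_⟩
  have hI' : I * I = -1 := by rw [← sq]; exact hI
  have hlift : ∀ n : ℕ, ((x : ℍ) + y • I) ^ n
      = (((z ^ n).re : ℝ) : ℍ) + ((z ^ n).im) • I := by
    intro n
    have hbase : (x : ℍ) + y • I = Complex.liftAux I hI' z := by
      rw [Complex.liftAux_apply]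
      simp [hz, QuaternionAlgebra.coe_algebraMap]
    rw [hbase, ← map_pow, Complex.liftAux_apply]; rfl
  have hterm : ∀ n : ℕ, ((x : ℍ) + y • I) ^ n * a n
      = ((z ^ n).re) • a n + I * (((z ^ n).im) • a n) := by
    intro n
    rw [hlift n, add_mul, smul_mul_assoc, mul_smul_comm]
    congr 1
    exact (Algebra.smul_def ((z ^ n).re) (a n)).symm
  calc ∑' n : ℕ, ((x : ℍ) + y • I) ^ n * a n
      = ∑' n : ℕ, (((z ^ n).re) • a n + I * (((z ^ n).im) • a n)) := by
        exact tsum_congr hterm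
    _ = (∑' n : ℕ, ((z ^ n).re) • a n) + ∑' n : ℕ, I * (((z ^ n).im) • a n) := by
        exact Summable.tsum_add hsumre (hsumim.mul_left I)
    _ = (∑' n : ℕ, ((z ^ n).re) • a n) + I * ∑' n : ℕ, ((z ^ n).im) • a n := by
        rw [tsum_mul_left]
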